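/- In a locally finite topos, if every essential monomorphism out of A is an isomorphism, then A is injective. -/

import Mathlib

open CategoryTheory CategoryTheory.Limits MonoidalCategory CartesianClosed MonoidalClosed CartesianMonoidalCategory

universe u v

/-- A subobject classifier, phrased as a property of a category with a terminal object. -/
class HasSubobjectClassifier' (C : Type u) [Category.{v} C] [HasTerminal C] : Prop where
  exists_classifier : ∃ (Ω : C) (truth : ⊤_ C ⟶ Ω), ∀ {U X : C} (m : U ⟶ X), Mono m →
    ∃! χ : X ⟶ Ω, IsPullback m (terminal.from U) χ truth

/-- A monomorphism `e` is essential if whenever `e ≫ g` is monic, so is `g`. -/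
def Essential {C : Type u} [Category.{v} C] {A B : C} (e : A ⟶ B) : Prop :=
  Mono e ∧ ∀ ⦃X : C⦄ (g : B ⟶ X), Mono (e ≫ g) → Mono g

namespace NoProperEssentialAux

variable {C : Type u} [Category.{v} C] [HasFiniteLimits C] [CartesianMonoidalCategory C]
  [MonoidalClosed C] {Ω : C} {t : ⊤_ C ⟶ Ω}

/-- The diagonal. -/
noncomputable abbrev diag (B : C) : B ⟶ B ⊗ B := lift (𝟙 B) (𝟙 B)

lemma mono_diag (B : C) : Mono (diag B) := by
  constructor
  intro T p q hpq
  have := congrArg (· ≫ CartesianMonoidalCategory.fst B B) hpq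
  simpa using this

/-- Core lemma: if the lift of `a, b` is classified as "true" by the classifier of the
diagonal, then `a = b`. -/
lemma eq_of_lift_comp_diag_chi {B T : C} {χ : B ⊗ B ⟶ Ω}
    (hχ : IsPullback (diag B) (terminal.from B) χ t)
    {a b : T ⟶ B} (hab : lift a b ≫ χ = terminal.from T ≫ t) : a = b := by
  have h1 := hχ.lift_fst (lift a b) (terminal.from T) hab
  have ha := congrArg (· ≫ CartesianMonoidalCategory.fst B B) h1
  have hb := congrArg (· ≫ CartesianMonoidalCategory.snd B B) h1
  simp only [Category.assoc, lift_fst, lift_snd, Category.comp_id] at ha hb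
  exact ha.symm.trans hb

lemma lift_same_comp_diag_chi {B T : C} {χ : B ⊗ B ⟶ Ω}
    (hχ : IsPullback (diag B) (terminal.from B) χ t) (a : T ⟶ B) :
    lift a a ≫ χ = terminal.from T ≫ t := by
  have h : lift a a = a ≫ diag B := by
    apply CartesianMonoidalCategory.hom_ext <;> simp
  rw [h, Category.assoc, hχ.w, ← Category.assoc, terminal.comp_from]

/-- The identity square over "true". -/
lemma isPullback_id_true (I : C) :
    IsPullback (𝟙 I) (terminal.from I) (terminal.from I ≫ t) t := by
  refine IsPullback.of_isLimit' ⟨by simp⟩ ?_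
  refine PullbackCone.IsLimit.mk _ (fun s => s.fst) (fun s => by simp) ?_ ?_
  · intro s; exact terminal.hom_ext _ _
  · intro s m h1 _; simpa using h1

/-- Balancedness: a mono epi is iso, via the classifier. -/
lemma isIso_of_mono_of_epi
    (hcl : ∀ {U X : C} (m : U ⟶ X), Mono m →
      ∃! χ : X ⟶ Ω, IsPullback m (terminal.from U) χ t)
    {E I : C} (e : E ⟶ I) (hm : Mono e) (he : Epi e) : IsIso e := by
  obtain ⟨χ, hχ, -⟩ := hcl e hm
  have hχ' : χ = terminal.from I ≫ t := by
    rw [← cancel_epi e, hχ.w, ← Category.assoc, terminal.comp_from]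
  rw [hχ'] at hχ
  have : (hχ.isoIsPullback _ _ (isPullback_id_true (t := t) I)).hom ≫ 𝟙 I = e :=
    hχ.isoIsPullback_hom_fst _ _ (isPullback_id_true (t := t) I)
  rw [Category.comp_id] at this
  rw [← this]
  infer_instance

lemma mono_truth : Mono t := by
  have : IsSplitMono t := IsSplitMono.mk' ⟨terminal.from Ω, terminal.hom_ext _ _⟩
  infer_instance

/-- `Ω` is injective. -/
lemma omega_injective
    (hcl : ∀ {U X : C} (m : U ⟶ X), Mono m →
      ∃! χ : X ⟶ Ω, IsPullback m (terminal.from U) χ t)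
    {X Y : C} (f : X ⟶ Y) [Mono f] (u : X ⟶ Ω) : ∃ w : Y ⟶ Ω, f ≫ w = u := by
  haveI : Mono t := mono_truth
  set S := pullback u t with hS
  set m : S ⟶ X := pullback.fst u t with hm
  haveI : Mono m := inferInstance
  have h2 : IsPullback m (terminal.from S) u t := by
    have := IsPullback.of_hasPullback u t
    have hsnd : pullback.snd u t = terminal.from S := terminal.hom_ext _ _
    rwa [hsnd] at this
  haveI : Mono (m ≫ f) := mono_comp _ _
  obtain ⟨χ, hχ, -⟩ := hcl (m ≫ f) ‹_›
  refine ⟨χ, ?_⟩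
  have comm : m ≫ (f ≫ χ) = terminal.from S ≫ t := by
    rw [← Category.assoc]; exact hχ.w
  have h1 : IsPullback m (terminal.from S) (f ≫ χ) t := by
    refine IsPullback.of_isLimit' ⟨comm⟩ ?_
    refine PullbackCone.IsLimit.mk _
      (fun s => hχ.lift (s.fst ≫ f) s.snd (by rw [Category.assoc]; exact s.condition))
      ?_ ?_ ?_
    · intro s
      rw [← cancel_mono f, Category.assoc]
      exact hχ.lift_fst _ _ _
    · intro s; exact terminal.hom_ext _ _
    · intro s mm h1' h2'
      apply hχ.hom_ext
      · rw [hχ.lift_fst, ← Category.assoc, h1']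
      · exact terminal.hom_ext _ _
  obtain ⟨χ₀, hχ₀, huniq⟩ := hcl m ‹Mono m›
  rw [huniq _ h1, huniq _ h2]

/-- The singleton map is mono. -/
lemma mono_singleton {B : C} {χ : B ⊗ B ⟶ Ω}
    (hχ : IsPullback (diag B) (terminal.from B) χ t) :
    Mono (MonoidalClosed.curry χ : B ⟶ B ⟹ Ω) := by
  constructor
  intro T a b hab
  have h1 : MonoidalClosed.curry (B ◁ a ≫ χ) = MonoidalClosed.curry (B ◁ b ≫ χ) := by
    rw [curry_natural_left, curry_natural_left, hab]
  have h2 : (B ◁ a) ≫ χ = (B ◁ b) ≫ χ :=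
    ((ihom.adjunction B).homEquiv _ _).injective h1
  have h3 : lift b (𝟙 T) ≫ (B ◁ a) = lift b a := by
    apply CartesianMonoidalCategory.hom_ext <;> simp
  have h4 : lift b (𝟙 T) ≫ (B ◁ b) = lift b b := by
    apply CartesianMonoidalCategory.hom_ext <;> simp
  have h5 : lift b a ≫ χ = lift b b ≫ χ := by
    rw [← h3, ← h4, Category.assoc, Category.assoc, h2]
  have h6 : lift b a ≫ χ = terminal.from T ≫ t := by
    rw [h5]; exact lift_same_comp_diag_chi hχ b
  exact (eq_of_lift_comp_diag_chi hχ h6).symm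

lemma mono_whiskerLeft (A' : C) {X Y : C} (f : X ⟶ Y) [Mono f] : Mono (A' ◁ f) := by
  constructor
  intro T p q hpq
  apply CartesianMonoidalCategory.hom_ext
  · have := congrArg (· ≫ CartesianMonoidalCategory.fst A' Y) hpq
    simpa using this
  · have := congrArg (· ≫ CartesianMonoidalCategory.snd A' Y) hpq
    simp only [Category.assoc, whiskerLeft_snd] at this
    rw [← Category.assoc, ← Category.assoc] at this
    exact (cancel_mono f).1 this

/-- Exponentials of `Ω` are injective. -/
lemma exp_injective
    (hcl : ∀ {U X : C} (m : U ⟶ X), Mono m →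
      ∃! χ : X ⟶ Ω, IsPullback m (terminal.from U) χ t)
    (A' : C) {X Y : C} (f : X ⟶ Y) [Mono f] (u : X ⟶ A' ⟹ Ω) :
    ∃ w : Y ⟶ A' ⟹ Ω, f ≫ w = u := by
  haveI := mono_whiskerLeft A' f
  obtain ⟨v, hv⟩ := omega_injective hcl (A' ◁ f) (MonoidalClosed.uncurry u)
  refine ⟨MonoidalClosed.curry v, ?_⟩
  rw [← curry_natural_left, hv, curry_uncurry]

lemma finite_subobject
    (hcl : ∀ {U X : C} (m : U ⟶ X), Mono m →
      ∃! χ : X ⟶ Ω, IsPullback m (terminal.from U) χ t)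
    (hfin : ∀ A B : C, Finite (A ⟶ B)) (X : C) : Finite (Subobject X) := by
  classical
  have key : ∀ S : Subobject X,
      ∃ χ : X ⟶ Ω, IsPullback S.arrow (terminal.from _) χ t :=
    fun S => (hcl S.arrow inferInstance).exists
  choose fn hfn using key
  haveI := hfin X Ω
  apply Finite.of_injective fn
  intro S T hST
  have hS : IsPullback S.arrow (terminal.from _) (fn T) t := hST ▸ hfn S
  have hT := hfn T
  exact Subobject.eq_of_comm (hS.isoIsPullback _ _ hT) (hS.isoIsPullback_hom_fst _ _ hT)

/-- Epi-mono (image) factorisation, using finiteness of the subobject lattice. -/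
lemma exists_image {E X : C} (g : E ⟶ X) (hfin : Finite (Subobject X)) :
    ∃ (I : C) (e : E ⟶ I) (ι : I ⟶ X), Epi e ∧ Mono ι ∧ e ≫ ι = g := by
  classical
  cases nonempty_fintype (Subobject X)
  let s : Finset (Subobject X) := Finset.univ.filter fun S => S.Factors g
  have hne : s.Nonempty := ⟨⊤, by simp [s, Subobject.top_factors]⟩
  set M := s.inf' hne id with hMdef
  have hM : M.Factors g := by
    refine Finset.inf'_mem {S : Subobject X | S.Factors g} ?_ s hne id ?_
    · intro x hx y hy
      exact (Subobject.inf_factors g).2 ⟨hx, hy⟩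
    · intro i hi
      simpa [s] using (Finset.mem_filter.1 hi).2
  have hleast : ∀ S : Subobject X, S.Factors g → M ≤ S := by
    intro S hS
    exact Finset.inf'_le id (by simp [s, hS])
  refine ⟨(M : C), M.factorThru g hM, M.arrow, ?_, inferInstance,
    Subobject.factorThru_arrow _ _ _⟩
  constructor
  intro T u v huv
  set k := equalizer.ι u v with hk
  haveI : Mono (k ≫ M.arrow) := mono_comp _ _
  have hS' : (Subobject.mk (k ≫ M.arrow)).Factors g := by
    rw [Subobject.mk_factors_iff]
    exact ⟨equalizer.lift (M.factorThru g hM) huv, by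
      simp only [MonoOver.mk_arrow]
      change equalizer.lift (M.factorThru g hM) huv ≫ k ≫ M.arrow = g
      rw [← Category.assoc, equalizer.lift_ι, Subobject.factorThru_arrow]⟩
  have hle := hleast _ hS'
  set j : (M : C) ⟶ equalizer u v :=
    Subobject.ofLE _ _ hle ≫ (Subobject.underlyingIso (k ≫ M.arrow)).hom with hj
  have hjk : j ≫ k = 𝟙 _ := by
    have h1 : (j ≫ k) ≫ M.arrow = M.arrow := by
      rw [hj]
      simp only [Category.assoc]
      rw [Subobject.underlyingIso_hom_comp_eq_mk, Subobject.ofLE_arrow]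
    rw [← cancel_mono M.arrow, h1, Category.id_comp]
  calc u = (j ≫ k) ≫ u := by rw [hjk, Category.id_comp]
    _ = (j ≫ k) ≫ v := by
        simp only [Category.assoc]
        rw [hk, equalizer.condition]
    _ = v := by rw [hjk, Category.id_comp]

lemma epi_whiskerLeft (A' : C) {E I : C} (e : E ⟶ I) (he : Epi e) : Epi (A' ◁ e) := by
  constructor
  intro T u v huv
  have h1 : e ≫ MonoidalClosed.curry u = e ≫ MonoidalClosed.curry v := by
    rw [← curry_natural_left, ← curry_natural_left, huv]
  have h2 := (cancel_epi e).1 h1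
  have := congrArg MonoidalClosed.uncurry h2
  rwa [uncurry_curry, uncurry_curry] at this

lemma epi_whiskerRight {E I : C} (e : E ⟶ I) (he : Epi e) (A' : C) : Epi (e ▷ A') := by
  letI : BraidedCategory C := .ofCartesianMonoidalCategory
  have h : (β_ E A').hom ≫ (A' ◁ e) ≫ (β_ I A').inv = e ▷ A' := by
    rw [← BraidedCategory.braiding_naturality_left_assoc e A', Iso.hom_inv_id,
      Category.comp_id]
  rw [← h]
  haveI := epi_whiskerLeft A' e he
  apply epi_comp
  
lemma epi_tensor {E I : C} (e : E ⟶ I) (he : Epi e) : Epi (e ⊗ₘ e) := by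
  rw [MonoidalCategory.tensorHom_def]
  haveI := epi_whiskerRight e he E
  haveI := epi_whiskerLeft I e he
  apply epi_comp

lemma lift_comp_tensor {T E I : C} (a b : T ⟶ E) (e : E ⟶ I) :
    lift a b ≫ (e ⊗ₘ e) = lift (a ≫ e) (b ≫ e) := by
  apply CartesianMonoidalCategory.hom_ext <;> simp

/-- The cardinality measure strictly drops along a non-invertible epi. -/
lemma card_lt
    (hcl : ∀ {U X : C} (m : U ⟶ X), Mono m →
      ∃! χ : X ⟶ Ω, IsPullback m (terminal.from U) χ t)
    (hfin : ∀ A B : C, Finite (A ⟶ B))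
    {E I : C} (e : E ⟶ I) (he : Epi e) (hni : ¬ IsIso e) :
    Nat.card (I ⊗ I ⟶ Ω) < Nat.card (E ⊗ E ⟶ Ω) := by
  classical
  haveI := hfin (I ⊗ I) Ω
  haveI := hfin (E ⊗ E) Ω
  letI : Fintype (I ⊗ I ⟶ Ω) := Fintype.ofFinite _
  letI : Fintype (E ⊗ E ⟶ Ω) := Fintype.ofFinite _
  rw [Nat.card_eq_fintype_card, Nat.card_eq_fintype_card]
  haveI hee := epi_tensor e he
  apply Fintype.card_lt_of_injective_not_surjective (fun ψ => (e ⊗ₘ e) ≫ ψ)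
  · intro ψ₁ ψ₂ h
    exact (cancel_epi (e ⊗ₘ e)).1 h
  · intro hsurj
    obtain ⟨χ, hχ, -⟩ := hcl (diag E) (mono_diag E)
    obtain ⟨ψ, hψ⟩ := hsurj χ
    have hmono : Mono e := by
      constructor
      intro T a b hab
      have h1 : lift a b ≫ χ = terminal.from T ≫ t := by
        have hχψ : (e ⊗ₘ e) ≫ ψ = χ := hψ
        rw [← hχψ, ← Category.assoc, lift_comp_tensor, hab, ← lift_comp_tensor b b,
          Category.assoc, hχψ]
        exact lift_same_comp_diag_chi hχ b
      exact eq_of_lift_comp_diag_chi hχ h1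
    exact hni (isIso_of_mono_of_epi hcl e hmono he)

/-- Main induction: every mono out of `A` extends to an essential one along some map. -/
lemma exists_essential
    (hcl : ∀ {U X : C} (m : U ⟶ X), Mono m →
      ∃! χ : X ⟶ Ω, IsPullback m (terminal.from U) χ t)
    (hfin : ∀ A B : C, Finite (A ⟶ B)) (A : C) :
    ∀ (n : ℕ) (E : C) (m : A ⟶ E), Mono m → Nat.card (E ⊗ E ⟶ Ω) ≤ n →
      ∃ (F : C) (p : E ⟶ F), Essential (m ≫ p) := by
  intro n
  induction n with
  | zero =>
    intro E m _ hle
    exfalso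
    haveI := hfin (E ⊗ E) Ω
    haveI : Nonempty (E ⊗ E ⟶ Ω) := ⟨terminal.from _ ≫ t⟩
    have := Nat.card_pos (α := E ⊗ E ⟶ Ω)
    omega
  | succ n ih =>
    intro E m hm hle
    by_cases hess : Essential m
    · exact ⟨E, 𝟙 E, by rwa [Category.comp_id]⟩
    · have h2 : ¬ ∀ ⦃X : C⦄ (g : E ⟶ X), Mono (m ≫ g) → Mono g := by
        intro hforall
        exact hess ⟨hm, hforall⟩
      push_neg at h2
      obtain ⟨X, g, hmg, hg⟩ := h2
      obtain ⟨I, e, ι, heepi, hιmono, hfac⟩ := exists_image g (finite_subobject hcl hfin X)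
      haveI := hιmono
      haveI : Mono ((m ≫ e) ≫ ι) := by rw [Category.assoc, hfac]; exact hmg
      haveI hme : Mono (m ≫ e) := mono_of_mono (m ≫ e) ι
      have hni : ¬ IsIso e := by
        intro hiso
        haveI := hiso
        have : Mono g := by rw [← hfac]; exact mono_comp _ _
        exact hg this
      have hlt := card_lt hcl hfin e heepi hni
      obtain ⟨F, p', hess'⟩ := ih I (m ≫ e) hme (by omega)
      exact ⟨F, e ≫ p', by rwa [← Category.assoc]⟩

end NoProperEssentialAux

theorem injective_of_no_proper_essential {C : Type u} [Category.{v} C] [HasFiniteLimits C] [CartesianMonoidalCategory C]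
    [MonoidalClosed C] [HasSubobjectClassifier' C]
    (locallyFinite : ∀ A B : C, Finite (A ⟶ B))
    (A : C) (h : ∀ (B : C) (e : A ⟶ B), Essential e → IsIso e) :
    Injective A := by
  obtain ⟨Ω, t, hcl⟩ := HasSubobjectClassifier'.exists_classifier (C := C)
  obtain ⟨χ, hχ, -⟩ := hcl (NoProperEssentialAux.diag A) (NoProperEssentialAux.mono_diag A)
  set σ : A ⟶ A ⟹ Ω := MonoidalClosed.curry χ with hσdef
  haveI hσ : Mono σ := NoProperEssentialAux.mono_singleton hχ
  obtain ⟨F, p, hess⟩ := NoProperEssentialAux.exists_essential hcl locallyFinite A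
    (Nat.card ((A ⟹ Ω) ⊗ (A ⟹ Ω) ⟶ Ω)) (A ⟹ Ω) σ hσ le_rfl
  have hiso : IsIso (σ ≫ p) := h F (σ ≫ p) hess
  constructor
  intro X Y u f hf
  obtain ⟨w, hw⟩ := NoProperEssentialAux.exp_injective hcl A f (u ≫ σ)
  refine ⟨w ≫ p ≫ inv (σ ≫ p), ?_⟩
  rw [← Category.assoc, hw]
  simp only [Category.assoc]
  rw [← Category.assoc σ p, IsIso.hom_inv_id, Category.comp_id]
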